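/- Let X be an allocation of a personalized bi-valued instance in which every ratio r_i = a_i/b_i is a positive integer. If X is Pareto-dominated by some allocation, then X admits a Type I witness or a Type II witness. -/

import Mathlib

open Finset

/-- Additive utility of a bundle: the sum of the values of the single goods in it. -/
def util {n : ℕ} {M : Type*} [DecidableEq M] (u : Fin n → M → ℝ) (i : Fin n)
    (S : Finset M) : ℝ :=
  ∑ g ∈ S, u i g

/-- `X` is an allocation: a partition of the set `M` of goods into `n` (possibly empty) bundles. -/
def IsAllocation {n : ℕ} {M : Type*} [DecidableEq M] (X : Fin n → Finset M) : Prop :=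
  (∀ g : M, ∃ i, g ∈ X i) ∧ ∀ i j : Fin n, i ≠ j → Disjoint (X i) (X j)

/-- `X` is EFX w.r.t. utilities `u`. -/
def IsEFX {n : ℕ} {M : Type*} [DecidableEq M] (u : Fin n → M → ℝ)
    (X : Fin n → Finset M) : Prop :=
  ∀ i j : Fin n, ∀ g ∈ X j, util u i ((X j).erase g) ≤ util u i (X i)

/-- `X'` Pareto-dominates `X` w.r.t. utilities `u`. -/
def ParetoDominates {n : ℕ} {M : Type*} [DecidableEq M] (u : Fin n → M → ℝ)
    (X' X : Fin n → Finset M) : Prop :=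
  (∀ i, util u i (X i) ≤ util u i (X' i)) ∧ ∃ j, util u j (X j) < util u j (X' j)

/-- `X` is Pareto-optimal: no allocation Pareto-dominates it. -/
def IsParetoOptimal {n : ℕ} {M : Type*} [DecidableEq M] (u : Fin n → M → ℝ)
    (X : Fin n → Finset M) : Prop :=
  ¬ ∃ X' : Fin n → Finset M, IsAllocation X' ∧ ParetoDominates u X' X

/-- The number of goods transferred (i.e. whose owner changes) when moving from
allocation `X` to allocation `X'`. -/
noncomputable def transferCount {n : ℕ} {M : Type*} [DecidableEq M]
    (X X' : Fin n → Finset M) : ℕ :=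
  Set.ncard {g : M | ∃ i, g ∈ X i ∧ g ∉ X' i}

/-- `X'` is a minimal Pareto-improvement of `X`: it is an allocation Pareto-dominating `X`
that minimizes the number of transferred goods among all such allocations. -/
def IsMinimalParetoImprovement {n : ℕ} {M : Type*} [DecidableEq M] (u : Fin n → M → ℝ)
    (X X' : Fin n → Finset M) : Prop :=
  IsAllocation X' ∧ ParetoDominates u X' X ∧
    ∀ X'' : Fin n → Finset M, IsAllocation X'' → ParetoDominates u X'' X →
      transferCount X X' ≤ transferCount X X''

/-- A Type I witness ("small-large exchange cycle") for an allocation `X`, w.r.t. a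
personalized bi-valued profile where agent `i` values large goods at `a i` and small goods
at `b i`.  It consists of distinct agents `ag 0, …, ag (k-1)` (`k ≥ 2`, 0-indexed) and goods
`g 0, …, g (k-1)` with `g t ∈ X (ag t)`, such that `g 0` is small for `ag 0` and large for
`ag 1`, the good `g t` is large for `ag t` and for `ag (t+1)` for `1 ≤ t ≤ k-2`, and it is
not the case that `g (k-1)` is large for `ag (k-1)` and small for `ag 0`. -/
def TypeIWitness {n : ℕ} {M : Type*} [DecidableEq M] (u : Fin n → M → ℝ)
    (a b : Fin n → ℝ) (X : Fin n → Finset M) : Prop :=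
  ∃ (k : ℕ) (ag : ℕ → Fin n) (g : ℕ → M),
    2 ≤ k ∧
    (∀ s, s < k → ∀ t, t < k → s ≠ t → ag s ≠ ag t) ∧
    (∀ t, t < k → g t ∈ X (ag t)) ∧
    u (ag 0) (g 0) = b (ag 0) ∧ u (ag 1) (g 0) = a (ag 1) ∧
    (∀ t, 1 ≤ t → t ≤ k - 2 →
      u (ag t) (g t) = a (ag t) ∧ u (ag (t + 1)) (g t) = a (ag (t + 1))) ∧
    ¬ (u (ag (k - 1)) (g (k - 1)) = a (ag (k - 1)) ∧ u (ag 0) (g (k - 1)) = b (ag 0))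

/-- A Type II witness ("one-to-many exchange cycle") for an allocation `X`, w.r.t. a
personalized bi-valued profile where agent `i` values large goods at `a i` and small goods
at `b i`.  It consists of distinct agents `ag 0, …, ag (k-1)` (`k ≥ 2`, 0-indexed) with
`r (ag 0) = a (ag 0) / b (ag 0)` a positive integer `R` and `r (ag 0) < r (ag (k-1))`,
`R` distinct goods `h 0, …, h (R-1) ∈ X (ag (k-1))` each small for `ag (k-1)` and for
`ag 0`, and goods `g 0, …, g (k-2)` with `g t ∈ X (ag t)` large for `ag t` and for
`ag (t+1)`. -/
def TypeIIWitness {n : ℕ} {M : Type*} [DecidableEq M] (u : Fin n → M → ℝ)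
    (a b : Fin n → ℝ) (X : Fin n → Finset M) : Prop :=
  ∃ (k R : ℕ) (ag : ℕ → Fin n) (h : ℕ → M) (g : ℕ → M),
    2 ≤ k ∧ 0 < R ∧
    (∀ s, s < k → ∀ t, t < k → s ≠ t → ag s ≠ ag t) ∧
    a (ag 0) / b (ag 0) = (R : ℝ) ∧
    a (ag 0) / b (ag 0) < a (ag (k - 1)) / b (ag (k - 1)) ∧
    (∀ j, j < R → ∀ j', j' < R → j ≠ j' → h j ≠ h j') ∧
    (∀ j, j < R →
      h j ∈ X (ag (k - 1)) ∧ u (ag (k - 1)) (h j) = b (ag (k - 1)) ∧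
        u (ag 0) (h j) = b (ag 0)) ∧
    (∀ t, t < k - 1 →
      g t ∈ X (ag t) ∧ u (ag t) (g t) = a (ag t) ∧ u (ag (t + 1)) (g t) = a (ag (t + 1)))

section PBVaux

open Finset

set_option linter.unusedSectionVars false

attribute [local instance] Classical.propDecidable

variable {n : ℕ} {M : Type*} [Fintype M] [DecidableEq M]

/-- Bundled data for the minimal-Pareto-improvement argument. -/
structure PBVSetup (n : ℕ) (M : Type*) [Fintype M] [DecidableEq M] where
  u : Fin n → M → ℝ
  a : Fin n → ℝ
  b : Fin n → ℝ
  R : Fin n → ℕ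
  X : Fin n → Finset M
  X' : Fin n → Finset M
  hab : ∀ i, b i < a i
  hb : ∀ i, 0 < b i
  hbi : ∀ i g, u i g = a i ∨ u i g = b i
  hRa : ∀ i, a i = (R i : ℝ) * b i
  hR2 : ∀ i, 2 ≤ R i
  hX : IsAllocation X
  hX' : IsAllocation X'
  hdom : ParetoDominates u X' X
  hmin : ∀ Y, IsAllocation Y → ParetoDominates u Y X →
    transferCount X X' ≤ transferCount X Y

namespace PBVSetup

variable (S : PBVSetup n M)

/-- `g` is large for agent `i`. -/
def lg (i : Fin n) (g : M) : Prop := S.u i g = S.a i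

noncomputable def w (i : Fin n) (g : M) : ℕ := if S.lg i g then S.R i else 1

noncomputable def val (i : Fin n) (T : Finset M) : ℕ := ∑ g ∈ T, S.w i g

lemma ne_ab (i : Fin n) : S.a i ≠ S.b i := ne_of_gt (S.hab i)
lemma sm_iff (i : Fin n) (g : M) : ¬ S.lg i g ↔ S.u i g = S.b i := by
  constructor
  · intro hn
    rcases S.hbi i g with h | h
    · exact absurd h hn
    · exact h
  · intro hsm hl
    exact S.ne_ab i ((hl.symm.trans hsm))
lemma w_one_le (i : Fin n) (g : M) : 1 ≤ S.w i g := by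
  have := S.hR2 i; unfold w; split <;> omega
lemma w_le_R (i : Fin n) (g : M) : S.w i g ≤ S.R i := by
  have := S.hR2 i; unfold w; split <;> omega
lemma w_lg {i : Fin n} {g : M} (h : S.lg i g) : S.w i g = S.R i := if_pos h
lemma w_sm {i : Fin n} {g : M} (h : ¬ S.lg i g) : S.w i g = 1 := if_neg h
lemma util_eq (i : Fin n) (T : Finset M) : util S.u i T = S.b i * (S.val i T : ℝ) := by
  unfold util val
  rw [Nat.cast_sum, Finset.mul_sum]
  apply Finset.sum_congr rfl
  intro g _
  unfold w
  split
  · rename_i h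
    rw [show S.u i g = S.a i from h, S.hRa i]; ring
  · rename_i h
    rw [(S.sm_iff i g).mp h]; norm_num
lemma val_le_iff (i : Fin n) (T T' : Finset M) :
    S.val i T ≤ S.val i T' ↔ util S.u i T ≤ util S.u i T' := by
  rw [S.util_eq, S.util_eq, mul_le_mul_iff_right₀ (S.hb i), Nat.cast_le]
lemma val_lt_iff (i : Fin n) (T T' : Finset M) :
    S.val i T < S.val i T' ↔ util S.u i T < util S.u i T' := by
  rw [S.util_eq, S.util_eq, mul_lt_mul_iff_right₀ (S.hb i), Nat.cast_lt]

end PBVSetup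

lemma allocExu (Y : Fin n → Finset M) (hY : IsAllocation Y) (g : M) : ∃! i, g ∈ Y i := by
  obtain ⟨i, hi⟩ := hY.1 g
  refine ⟨i, hi, ?_⟩
  intro j hj
  by_contra hne
  exact (Finset.disjoint_left.mp (hY.2 j i hne) hj) hi

namespace PBVSetup

variable (S : PBVSetup n M)

noncomputable def own (g : M) : Fin n := Fintype.choose _ (allocExu S.X S.hX g)
noncomputable def own' (g : M) : Fin n := Fintype.choose _ (allocExu S.X' S.hX' g)

lemma own_mem (g : M) : g ∈ S.X (S.own g) := Fintype.choose_spec (fun i => g ∈ S.X i) _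
lemma own'_mem (g : M) : g ∈ S.X' (S.own' g) := Fintype.choose_spec (fun i => g ∈ S.X' i) _
lemma mem_X_iff {g : M} {i : Fin n} : g ∈ S.X i ↔ S.own g = i := by
  constructor
  · intro h
    by_contra hne
    exact (Finset.disjoint_left.mp (S.hX.2 _ _ hne) (S.own_mem g)) h
  · intro h; rw [← h]; exact S.own_mem g
lemma mem_X'_iff {g : M} {i : Fin n} : g ∈ S.X' i ↔ S.own' g = i := by
  constructor
  · intro h
    by_contra hne
    exact (Finset.disjoint_left.mp (S.hX'.2 _ _ hne) (S.own'_mem g)) h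
  · intro h; rw [← h]; exact S.own'_mem g

/-- Allocation determined by an ownership function. -/
noncomputable def alc (f : M → Fin n) : Fin n → Finset M :=
  fun i => univ.filter (fun g => f g = i)

lemma mem_alc {f : M → Fin n} {g : M} {i : Fin n} : g ∈ alc f i ↔ f g = i := by
  simp [alc]
lemma alc_isAllocation (f : M → Fin n) : IsAllocation (alc f : Fin n → Finset M) := by
  constructor
  · intro g; exact ⟨f g, mem_alc.mpr rfl⟩
  · intro i j hne
    rw [Finset.disjoint_left]
    intro g h1 h2
    rw [mem_alc] at h1 h2
    exact hne (h1 ▸ h2)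
lemma X'_eq : S.X' = alc S.own' := by
  funext i; ext g
  rw [mem_alc]; exact S.mem_X'_iff

noncomputable def Val (f : M → Fin n) (i : Fin n) : ℕ :=
  ∑ g ∈ univ, if f g = i then S.w i g else 0

lemma val_alc (f : M → Fin n) (i : Fin n) : S.val i (alc f i) = S.Val f i := by
  unfold val alc Val
  rw [Finset.sum_filter]
lemma valX' (i : Fin n) : S.val i (S.X' i) = S.Val S.own' i := by
  rw [S.X'_eq, S.val_alc]

lemma tc_alc (f : M → Fin n) :
    transferCount S.X (alc f) = (univ.filter fun g => S.own g ≠ f g).card := by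
  unfold transferCount
  have hset : {g : M | ∃ i, g ∈ S.X i ∧ g ∉ alc f i}
      = ↑(univ.filter fun g => S.own g ≠ f g) := by
    ext g
    simp only [Set.mem_setOf_eq, Finset.coe_filter, Finset.mem_univ, true_and]
    constructor
    · rintro ⟨i, hXi, hnot⟩
      have h1 := S.mem_X_iff.mp hXi
      intro heq
      exact hnot (mem_alc.mpr (by rw [← heq, h1]))
    · intro hne
      refine ⟨S.own g, S.own_mem g, ?_⟩
      intro hmem
      exact hne (mem_alc.mp hmem).symm
  rw [hset, Set.ncard_coe_finset]

noncomputable def E : Finset M := univ.filter fun g => S.own g ≠ S.own' g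

lemma mem_E {g : M} : g ∈ S.E ↔ S.own g ≠ S.own' g := by
  simp [E]
lemma tcXX' : transferCount S.X S.X' = S.E.card := by
  rw [S.X'_eq, S.tc_alc]; rfl

noncomputable def inV (v : Fin n) : ℕ := ∑ g ∈ S.E.filter (fun g => S.own' g = v), S.w v g
noncomputable def outV (v : Fin n) : ℕ := ∑ g ∈ S.E.filter (fun g => S.own g = v), S.w v g
noncomputable def Dl (v : Fin n) : ℤ := (S.inV v : ℤ) - S.outV v

lemma key0 (v : Fin n) : (S.Val S.own' v : ℤ) = S.Val S.own v + S.Dl v := by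
  have e1 : S.Val S.own' v
      = (∑ g ∈ univ \ S.E, if S.own g = v then S.w v g else 0) + S.inV v := by
    unfold Val inV
    rw [Finset.sum_filter, ← Finset.sum_sdiff (Finset.subset_univ S.E)]
    congr 1
    apply Finset.sum_congr rfl
    intro g hg
    have hgo : S.own g = S.own' g := by
      have h2 := (Finset.mem_sdiff.mp hg).2
      by_contra hne
      exact h2 (S.mem_E.mpr hne)
    rw [hgo]
  have e2 : S.Val S.own v
      = (∑ g ∈ univ \ S.E, if S.own g = v then S.w v g else 0) + S.outV v := by
    unfold Val outV
    rw [Finset.sum_filter, ← Finset.sum_sdiff (Finset.subset_univ S.E)]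
  unfold Dl
  rw [e1, e2]
  push_cast
  ring
lemma X_eq : S.X = alc S.own := by
  funext i; ext g
  rw [mem_alc]; exact S.mem_X_iff

lemma valX (i : Fin n) : S.val i (S.X i) = S.Val S.own i := by
  rw [S.X_eq, S.val_alc]
lemma Dl_nonneg (v : Fin n) : 0 ≤ S.Dl v := by
  have h := (S.val_le_iff v (S.X v) (S.X' v)).mpr (S.hdom.1 v)
  rw [S.valX, S.valX'] at h
  have hk := S.key0 v
  omega
lemma Dl_ex_pos : ∃ j, 1 ≤ S.Dl j := by
  obtain ⟨j, hj⟩ := S.hdom.2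
  refine ⟨j, ?_⟩
  have h := (S.val_lt_iff j (S.X j) (S.X' j)).mpr hj
  rw [S.valX, S.valX'] at h
  have hk := S.key0 j
  omega

lemma no_improve (f : M → Fin n)
    (h1 : ∀ i, S.val i (S.X i) ≤ S.Val f i)
    (h2 : ∃ j, S.val j (S.X j) < S.Val f j)
    (h3 : (univ.filter fun g => S.own g ≠ f g).card < S.E.card) : False := by
  have hd : ParetoDominates S.u (alc f) S.X := by
    constructor
    · intro i
      have := h1 i
      rw [← S.val_alc f i] at this
      exact (S.val_le_iff i (S.X i) (alc f i)).mp this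
    · obtain ⟨j, hj⟩ := h2
      rw [← S.val_alc f j] at hj
      exact ⟨j, (S.val_lt_iff j (S.X j) (alc f j)).mp hj⟩
  have hm := S.hmin (alc f) (alc_isAllocation f) hd
  rw [S.tcXX', S.tc_alc] at hm
  omega

lemma Val_update (f₀ : M → Fin n) (g : M) (α : Fin n) (i : Fin n) :
    S.Val (Function.update f₀ g α) i + (if f₀ g = i then S.w i g else 0)
      = S.Val f₀ i + (if α = i then S.w i g else 0) := by
  have L : S.Val (Function.update f₀ g α) i
      = (∑ h ∈ univ.erase g, if f₀ h = i then S.w i h else 0)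
        + (if α = i then S.w i g else 0) := by
    unfold Val
    rw [← Finset.sum_erase_add univ _ (mem_univ g), Function.update_self]
    congr 1
    exact Finset.sum_congr rfl fun h hh => by
      rw [Function.update_of_ne (Finset.ne_of_mem_erase hh)]
  have Rr : S.Val f₀ i
      = (∑ h ∈ univ.erase g, if f₀ h = i then S.w i h else 0)
        + (if f₀ g = i then S.w i g else 0) := by
    unfold Val
    rw [← Finset.sum_erase_add univ _ (mem_univ g)]
  rw [L, Rr]
  ring

/-- (U1) returning a transferred good to its old owner. -/
lemma Val_ret (f₀ : M → Fin n) (g : M) (α : Fin n) (i : Fin n) :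
    (S.Val (Function.update f₀ g α) i : ℤ)
      = S.Val f₀ i + (if α = i then (S.w i g : ℤ) else 0)
        - (if f₀ g = i then (S.w i g : ℤ) else 0) := by
  have := S.Val_update f₀ g α i
  split_ifs at this ⊢ <;> push_cast at this ⊢ <;> omega

lemma ret {g : M} (hg : g ∈ S.E) : S.Dl (S.own' g) < S.w (S.own' g) g := by
  by_contra hcon
  push_neg at hcon
  have hsd : S.own g ≠ S.own' g := S.mem_E.mp hg
  set f := Function.update S.own' g (S.own g) with hf
  have hVal : ∀ i, (S.Val f i : ℤ)
      = S.Val S.own' i + (if S.own g = i then (S.w i g : ℤ) else 0)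
        - (if S.own' g = i then (S.w i g : ℤ) else 0) := fun i => S.Val_ret S.own' g (S.own g) i
  apply S.no_improve f
  · intro i
    have hv := hVal i
    have hk := S.key0 i
    have hd := S.Dl_nonneg i
    rw [S.valX]
    rcases eq_or_ne (S.own' g) i with rfl | hdi
    · rw [if_neg (by exact fun hh => hsd hh), if_pos rfl] at hv
      have hDl : (S.w (S.own' g) g : ℤ) ≤ S.Dl (S.own' g) := hcon
      omega
    · rw [if_neg hdi] at hv
      split_ifs at hv <;> [skip; skip] <;>
        (first
          | (have hw : (0:ℤ) ≤ S.w i g := by positivity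
             omega)
          | omega)
  · refine ⟨S.own g, ?_⟩
    have hv := hVal (S.own g)
    rw [if_pos rfl, if_neg (fun hh => hsd hh.symm)] at hv
    have hk := S.key0 (S.own g)
    have hd := S.Dl_nonneg (S.own g)
    have hw : (1:ℤ) ≤ S.w (S.own g) g := by exact_mod_cast S.w_one_le (S.own g) g
    rw [S.valX]
    omega
  · have hset : (univ.filter fun h => S.own h ≠ f h) = S.E.erase g := by
      ext h
      simp only [Finset.mem_filter, mem_univ, true_and, Finset.mem_erase, S.mem_E]
      rcases eq_or_ne h g with rfl | hhg
      · rw [hf, Function.update_self]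
        simp
      · rw [hf, Function.update_of_ne hhg]
        simp [hhg]
    rw [hset]
    exact Finset.card_erase_lt_of_mem hg

lemma giver_receiver {v : Fin n} (h : 0 < S.outV v) : 0 < S.inV v := by
  have := S.Dl_nonneg v
  unfold Dl at this
  omega
lemma ex_in_edge {v : Fin n} (h : 0 < S.inV v) :
    ∃ g ∈ S.E, S.own' g = v := by
  by_contra hc
  push_neg at hc
  have hemp : S.E.filter (fun g => S.own' g = v) = ∅ :=
    Finset.filter_eq_empty_iff.mpr (fun {g} hg => hc g hg)
  unfold inV at h
  rw [hemp] at h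
  simp at h
lemma outV_pos {v : Fin n} (hg : ∃ g ∈ S.E, S.own g = v) : 0 < S.outV v := by
  obtain ⟨g, hgE, hgv⟩ := hg
  have hmem : g ∈ S.E.filter (fun g => S.own g = v) := Finset.mem_filter.mpr ⟨hgE, hgv⟩
  have h1 : S.w v g ≤ S.outV v :=
    Finset.single_le_sum (fun i _ => Nat.zero_le _) hmem
  have hw := S.w_one_le v g
  omega

lemma inV_pos {v : Fin n} (hg : ∃ g ∈ S.E, S.own' g = v) : 0 < S.inV v := by
  obtain ⟨g, hgE, hgv⟩ := hg
  have hmem : g ∈ S.E.filter (fun g => S.own' g = v) := Finset.mem_filter.mpr ⟨hgE, hgv⟩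
  have h1 : S.w v g ≤ S.inV v :=
    Finset.single_le_sum (fun i _ => Nat.zero_le _) hmem
  have hw := S.w_one_le v g
  omega

lemma ex_out_edge {v : Fin n} (hg : ∃ g ∈ S.E, S.own g = v) :
    ∃ g' ∈ S.E, S.own' g' = v :=
  S.ex_in_edge (S.giver_receiver (S.outV_pos hg))
lemma ex_out_edge' {v : Fin n} (h : 0 < S.outV v) : ∃ g ∈ S.E, S.own g = v := by
  by_contra hc
  push_neg at hc
  have hemp : S.E.filter (fun g => S.own g = v) = ∅ :=
    Finset.filter_eq_empty_iff.mpr (fun {g} hg => hc g hg)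
  unfold outV at h
  rw [hemp] at h
  simp at h

lemma out_edge_of_in {v : Fin n} (hg : ∃ g ∈ S.E, S.own' g = v) :
    ∃ g' ∈ S.E, S.own g' = v := by
  obtain ⟨g, hgE, hgv⟩ := hg
  have h1 : S.w v g ≤ S.inV v := by
    have hmem : g ∈ S.E.filter (fun g => S.own' g = v) := Finset.mem_filter.mpr ⟨hgE, hgv⟩
    exact Finset.single_le_sum (fun i _ => Nat.zero_le _) hmem
  have h2 : S.Dl v < S.w v g := hgv ▸ S.ret hgE
  have h3 : 0 < S.outV v := by
    unfold Dl at h2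
    omega
  exact S.ex_out_edge' h3

/-- (PAIR) the reroute/return move on a pair of edges `g : s → x`, `g' : x → y`. -/
lemma pair {g g' : M} (hg : g ∈ S.E) (hg' : g' ∈ S.E) (hne : g ≠ g')
    (hx : S.own' g = S.own g')
    (h2 : S.w (S.own g') g ≤ S.w (S.own g') g') :
    S.w (S.own' g') g < S.w (S.own' g') g' := by
  by_contra hcon
  push_neg at hcon
  set x := S.own g' with hxdef
  set y := S.own' g' with hydef
  have hxy : x ≠ y := S.mem_E.mp hg'
  set f := Function.update (Function.update S.own' g y) g' x with hf
  have hfg : f g = y := by rw [hf, Function.update_of_ne hne, Function.update_self]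
  have hVal : ∀ i, (S.Val f i : ℤ)
      = S.Val S.own' i
        + ((if y = i then (S.w i g : ℤ) else 0) - (if x = i then (S.w i g : ℤ) else 0))
        + ((if x = i then (S.w i g' : ℤ) else 0) - (if y = i then (S.w i g' : ℤ) else 0)) := by
    intro i
    have e1 := S.Val_ret (Function.update S.own' g y) g' x i
    have e2 := S.Val_ret S.own' g y i
    rw [Function.update_of_ne (Ne.symm hne)] at e1
    rw [hx] at e2
    rw [hf]
    omega
  have hw2 : (S.w x g : ℤ) ≤ S.w x g' := by exact_mod_cast h2
  have hwc : (S.w y g' : ℤ) ≤ S.w y g := by exact_mod_cast hcon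
  have hmono : ∀ i, (S.Val S.own' i : ℤ) ≤ S.Val f i := by
    intro i
    by_cases hyi : y = i <;> by_cases hxi : x = i
    · exact absurd (hxi.trans hyi.symm) hxy
    · have hv := hVal i
      rw [if_pos hyi, if_pos hyi, if_neg hxi, if_neg hxi] at hv
      have h5 : (S.w i g' : ℤ) ≤ S.w i g := by rw [← hyi]; exact hwc
      omega
    · have hv := hVal i
      rw [if_neg hyi, if_neg hyi, if_pos hxi, if_pos hxi] at hv
      have h5 : (S.w i g : ℤ) ≤ S.w i g' := by rw [← hxi]; exact hw2
      omega
    · have hv := hVal i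
      rw [if_neg hyi, if_neg hyi, if_neg hxi, if_neg hxi] at hv
      omega
  apply S.no_improve f
  · intro i
    have h1 := hmono i
    have hk := S.key0 i
    have hd := S.Dl_nonneg i
    rw [S.valX]
    omega
  · obtain ⟨j, hj⟩ := S.Dl_ex_pos
    refine ⟨j, ?_⟩
    have h1 := hmono j
    have hk := S.key0 j
    rw [S.valX]
    omega
  · have hsub : (univ.filter fun h => S.own h ≠ f h) ⊆ S.E.erase g' := by
      intro h hh
      rw [Finset.mem_filter] at hh
      have hh2 := hh.2
      rcases eq_or_ne h g' with rfl | h1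
      · exfalso
        rw [hf, Function.update_self] at hh2
        exact hh2 rfl
      · rcases eq_or_ne h g with rfl | hgg
        · exact Finset.mem_erase.mpr ⟨hne, hg⟩
        · rw [hf, Function.update_of_ne h1, Function.update_of_ne hgg] at hh2
          exact Finset.mem_erase.mpr ⟨h1, S.mem_E.mpr hh2⟩
    calc (univ.filter fun h => S.own h ≠ f h).card
        ≤ (S.E.erase g').card := Finset.card_le_card hsub
      _ < S.E.card := Finset.card_erase_lt_of_mem hg'

/-- no large-to-small edges. -/
lemma noLS {g' : M} (hg' : g' ∈ S.E) (h : S.lg (S.own g') g') : S.lg (S.own' g') g' := by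
  by_contra hns
  obtain ⟨g, hgE, hgd⟩ := S.giver_receiver (S.outV_pos ⟨g', hg', rfl⟩) |> S.ex_in_edge
  have hne : g ≠ g' := by
    intro heq
    subst heq
    exact S.mem_E.mp hgE hgd.symm
  have hp := S.pair hgE hg' hne hgd (by rw [S.w_lg h]; exact S.w_le_R _ _)
  rw [S.w_sm hns] at hp
  have := S.w_one_le (S.own' g') g
  omega

/-- an agent sending a small-small good receives only large goods. -/
lemma ssOutIns {g' : M} (hg' : g' ∈ S.E) (h1 : ¬ S.lg (S.own g') g')
    (h2 : ¬ S.lg (S.own' g') g') :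
    ∀ g ∈ S.E, S.own' g = S.own g' → S.lg (S.own g') g := by
  intro g hgE hgx
  by_contra hsm
  have hne : g ≠ g' := by
    intro heq
    subst heq
    exact S.mem_E.mp hgE hgx.symm
  have hp := S.pair hgE hg' hne hgx (by rw [S.w_sm hsm, S.w_sm h1])
  rw [S.w_sm h2] at hp
  have := S.w_one_le (S.own' g') g
  omega

/-- undoing an all-large transfer cycle. -/
lemma cycle (T : Finset M) (hTE : T ⊆ S.E) (hT0 : T.Nonempty)
    (hinj : Set.InjOn S.own (T : Set M))
    (hls : ∀ g ∈ T, S.lg (S.own g) g) (hld : ∀ g ∈ T, S.lg (S.own' g) g)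
    (himg : T.image S.own = T.image S.own') : False := by
  set f : M → Fin n := fun h => if h ∈ T then S.own h else S.own' h with hf
  have hcard : (T.image S.own').card = T.card := by
    rw [← himg, Finset.card_image_of_injOn hinj]
  have hinj' : Set.InjOn S.own' (T : Set M) := Finset.card_image_iff.mp hcard
  have key : ∀ i, (∑ h ∈ T, if S.own h = i then S.w i h else 0)
      = (∑ h ∈ T, if S.own' h = i then S.w i h else 0) := by
    intro i
    have c1 : ∀ (ow : M → Fin n), Set.InjOn ow (T : Set M) → (∀ h ∈ T, S.lg (ow h) h) →
        (∑ h ∈ T, if ow h = i then S.w i h else 0)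
          = if i ∈ T.image ow then S.R i else 0 := by
      intro ow hio hlgo
      by_cases hi : i ∈ T.image ow
      · obtain ⟨h0, hh0, hh0i⟩ := Finset.mem_image.mp hi
        rw [if_pos hi, Finset.sum_eq_single h0]
        · rw [if_pos hh0i, S.w_lg (by rw [← hh0i]; exact hlgo h0 hh0)]
        · intro h1 hh1 hne1
          rw [if_neg]
          intro he
          exact hne1 (hio hh1 hh0 (he.trans hh0i.symm))
        · intro habs
          exact absurd hh0 habs
      · rw [if_neg hi]
        apply Finset.sum_eq_zero
        intro h1 hh1
        rw [if_neg]
        intro he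
        exact hi (Finset.mem_image.mpr ⟨h1, hh1, he⟩)
    rw [c1 S.own hinj hls, c1 S.own' hinj' hld, himg]
  have hVal : ∀ i, S.Val f i = S.Val S.own' i := by
    intro i
    unfold Val
    rw [← Finset.sum_sdiff (Finset.subset_univ T),
      ← Finset.sum_sdiff (Finset.subset_univ T)]
    congr 1
    · apply Finset.sum_congr rfl
      intro h hh
      have hnT : h ∉ T := (Finset.mem_sdiff.mp hh).2
      rw [hf]
      simp only [hnT, if_false, ite_false]
    · calc (∑ h ∈ T, if f h = i then S.w i h else 0)
          = (∑ h ∈ T, if S.own h = i then S.w i h else 0) := by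
            apply Finset.sum_congr rfl
            intro h hh
            rw [hf]
            simp only [hh, if_true, ite_true]
        _ = _ := key i
  apply S.no_improve f
  · intro i
    rw [hVal, S.valX]
    have hk := S.key0 i
    have hd := S.Dl_nonneg i
    omega
  · obtain ⟨j, hj⟩ := S.Dl_ex_pos
    refine ⟨j, ?_⟩
    rw [hVal, S.valX]
    have hk := S.key0 j
    omega
  · have hcnt : (univ.filter fun h => S.own h ≠ f h) = S.E \ T := by
      ext h
      simp only [Finset.mem_filter, mem_univ, true_and, Finset.mem_sdiff, S.mem_E]
      by_cases hh : h ∈ T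
      · simp [hf, hh]
      · simp [hf, hh]
    rw [hcnt]
    have h1 : 0 < T.card := Finset.card_pos.mpr hT0
    have h2 : T.card ≤ S.E.card := Finset.card_le_card hTE
    have h3 : (S.E \ T).card = S.E.card - T.card := Finset.card_sdiff_of_subset hTE
    omega

lemma exists_cycle (A : Finset (Fin n)) (hA : A.Nonempty) (nxt : Fin n → M)
    (hnxt : ∀ x ∈ A, nxt x ∈ S.E ∧ S.own (nxt x) = x ∧ S.lg x (nxt x) ∧
      S.lg (S.own' (nxt x)) (nxt x) ∧ S.own' (nxt x) ∈ A) : False := by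
  obtain ⟨a0, ha0⟩ := hA
  set τ : Fin n → Fin n := fun x => S.own' (nxt x) with hτ
  set sq : ℕ → Fin n := fun k => τ^[k] a0 with hsq
  have hmem : ∀ k, sq k ∈ A := by
    intro k
    induction k with
    | zero => exact ha0
    | succ k ih =>
        have : sq (k+1) = τ (sq k) := by
          rw [hsq]
          exact Function.iterate_succ_apply' τ k a0
        rw [this]
        exact (hnxt _ ih).2.2.2.2
  have hsucc : ∀ k, sq (k+1) = S.own' (nxt (sq k)) := by
    intro k
    rw [hsq]
    exact Function.iterate_succ_apply' τ k a0
  have hpig : ∃ i ∈ Finset.range (n+1), ∃ j ∈ Finset.range (n+1), i ≠ j ∧ sq i = sq j := by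
    apply Finset.exists_ne_map_eq_of_card_lt_of_maps_to
    · rw [Finset.card_range, Finset.card_univ, Fintype.card_fin]
      omega
    · intro a _
      exact Finset.mem_univ _
  obtain ⟨i, _, j, _, hij, hsij⟩ := hpig
  have hex : ∃ k, ∃ ii < k, sq ii = sq k := by
    rcases lt_or_gt_of_ne hij with h | h
    · exact ⟨j, i, h, hsij⟩
    · exact ⟨i, j, h, hsij.symm⟩
  set q := Nat.find hex with hqdef
  obtain ⟨p, hpq, hpqe⟩ := Nat.find_spec hex
  have hinjseq : ∀ i1, p ≤ i1 → i1 < q → ∀ i2, p ≤ i2 → i2 < q → sq i1 = sq i2 → i1 = i2 := by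
    intro i1 h1 h1' i2 h2 h2' he
    by_contra hne12
    rcases lt_or_gt_of_ne hne12 with h | h
    · exact (Nat.find_min hex h2') ⟨i1, h, he⟩
    · exact (Nat.find_min hex h1') ⟨i2, h, he.symm⟩
  set T : Finset M := (Finset.Ico p q).image (fun k => nxt (sq k)) with hT
  have hmemT : ∀ g ∈ T, ∃ k, p ≤ k ∧ k < q ∧ g = nxt (sq k) := by
    intro g hg
    obtain ⟨k, hk, hke⟩ := Finset.mem_image.mp hg
    rw [Finset.mem_Ico] at hk
    exact ⟨k, hk.1, hk.2, hke.symm⟩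
  apply S.cycle T
  · intro g hg
    obtain ⟨k, _, _, rfl⟩ := hmemT g hg
    exact (hnxt _ (hmem k)).1
  · refine ⟨nxt (sq p), Finset.mem_image.mpr ⟨p, Finset.mem_Ico.mpr ⟨le_refl _, hpq⟩, rfl⟩⟩
  · intro g1 hg1 g2 hg2 hee
    rw [Finset.mem_coe] at hg1 hg2
    obtain ⟨k1, hk11, hk12, rfl⟩ := hmemT g1 hg1
    obtain ⟨k2, hk21, hk22, rfl⟩ := hmemT g2 hg2
    have e1 : S.own (nxt (sq k1)) = sq k1 := (hnxt _ (hmem k1)).2.1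
    have e2 : S.own (nxt (sq k2)) = sq k2 := (hnxt _ (hmem k2)).2.1
    have : sq k1 = sq k2 := by rw [← e1, ← e2, hee]
    rw [hinjseq k1 hk11 hk12 k2 hk21 hk22 this]
  · intro g hg
    obtain ⟨k, _, _, rfl⟩ := hmemT g hg
    rw [(hnxt _ (hmem k)).2.1]
    exact (hnxt _ (hmem k)).2.2.1
  · intro g hg
    obtain ⟨k, _, _, rfl⟩ := hmemT g hg
    exact (hnxt _ (hmem k)).2.2.2.1
  · -- image equality
    rw [hT, Finset.image_image, Finset.image_image]
    have e1 : ∀ k ∈ Finset.Ico p q, (S.own ∘ fun k => nxt (sq k)) k = sq k := by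
      intro k _
      exact (hnxt _ (hmem k)).2.1
    have e2 : ∀ k ∈ Finset.Ico p q, (S.own' ∘ fun k => nxt (sq k)) k = sq (k+1) := by
      intro k _
      rw [Function.comp_apply, ← hsucc k]
    rw [Finset.image_congr e1, Finset.image_congr e2]
    ext z
    simp only [Finset.mem_image, Finset.mem_Ico]
    constructor
    · rintro ⟨k, ⟨hk1, hk2⟩, rfl⟩
      by_cases hkp : k = p
      · refine ⟨q - 1, ⟨by omega, by omega⟩, ?_⟩
        have hq1 : q - 1 + 1 = q := by omega
        rw [hq1, ← hpqe, hkp]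
      · exact ⟨k - 1, ⟨by omega, by omega⟩, by rw [show k - 1 + 1 = k by omega]⟩
    · rintro ⟨k, ⟨hk1, hk2⟩, rfl⟩
      by_cases hkq : k = q - 1
      · refine ⟨p, ⟨le_refl _, hpq⟩, ?_⟩
        rw [hkq, show q - 1 + 1 = q by omega, ← hpqe]
      · exact ⟨k + 1, ⟨by omega, by omega⟩, rfl⟩

end PBVSetup

/-- a relational walk can be refined to an injective (simple) path. -/
lemma path_dedup {α : Type*} (r : α → α → Prop) (y x : α) :
    ∀ (m : ℕ) (p : ℕ → α), p 0 = y → p m = x → (∀ t, t < m → r (p t) (p (t + 1))) →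
    ∃ (m' : ℕ) (p' : ℕ → α), p' 0 = y ∧ p' m' = x ∧ (∀ t, t < m' → r (p' t) (p' (t + 1))) ∧
      (∀ s, s ≤ m' → ∀ t, t ≤ m' → s ≠ t → p' s ≠ p' t) := by
  intro m
  induction m using Nat.strong_induction_on with
  | _ m ih =>
    intro p h0 hm hc
    by_cases hnd : ∀ s, s ≤ m → ∀ t, t ≤ m → s ≠ t → p s ≠ p t
    · exact ⟨m, p, h0, hm, hc, hnd⟩
    · push_neg at hnd
      obtain ⟨s, hs, t, ht, hst, he⟩ := hnd
      have hwlog : ∃ s t, s < t ∧ t ≤ m ∧ p s = p t := by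
        rcases lt_or_gt_of_ne hst with h | h
        · exact ⟨s, t, h, ht, he⟩
        · exact ⟨t, s, h, hs, he.symm⟩
      obtain ⟨s', t', hlt, htm, heq⟩ := hwlog
      set p2 : ℕ → α := fun i => if i ≤ s' then p i else p (i + (t' - s')) with hp2
      have hdlt : 0 < t' - s' := by omega
      apply ih (m - (t' - s')) (by omega) p2
      · rw [hp2]
        simp only [Nat.zero_le, if_true, ite_true]
        exact h0
      · rw [hp2]
        by_cases hh : m - (t' - s') ≤ s'
        · have ht'm : t' = m := by omega
          have hms : m - (t' - s') = s' := by omega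
          simp only [hms, le_refl, if_true, ite_true]
          rw [heq, ht'm]
          exact hm
        · simp only [hh, if_false, ite_false]
          rw [show m - (t' - s') + (t' - s') = m by omega]
          exact hm
      · intro t0 ht0
        by_cases h1 : t0 + 1 ≤ s'
        · rw [hp2]
          simp only [h1, show t0 ≤ s' by omega, if_true, ite_true]
          exact hc t0 (by omega)
        · by_cases h2 : t0 ≤ s'
          · have hts : t0 = s' := by omega
            rw [hp2]
            simp only [h1, h2, if_true, if_false, ite_true, ite_false]
            rw [hts, heq, show s' + 1 + (t' - s') = t' + 1 by omega]
            exact hc t' (by omega)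
          · rw [hp2]
            simp only [h1, h2, if_false, ite_false]
            rw [show t0 + 1 + (t' - s') = t0 + (t' - s') + 1 by omega]
            exact hc _ (by omega)

lemma exists_simple_path {α : Type*} (r : α → α → Prop) {y x : α}
    (h : Relation.ReflTransGen r y x) :
    ∃ (m : ℕ) (p : ℕ → α), p 0 = y ∧ p m = x ∧ (∀ t, t < m → r (p t) (p (t + 1))) ∧
      (∀ s, s ≤ m → ∀ t, t ≤ m → s ≠ t → p s ≠ p t) := by
  have h1 : ∃ (m : ℕ) (p : ℕ → α), p 0 = y ∧ p m = x ∧ ∀ t, t < m → r (p t) (p (t + 1)) := by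
    induction h with
    | refl => exact ⟨0, fun _ => y, rfl, rfl, by omega⟩
    | @tail b c hyb hbc ih =>
        obtain ⟨m, p, h0, hm, hc⟩ := ih
        refine ⟨m + 1, fun t => if t = m + 1 then c else p t, ?_, ?_, ?_⟩
        · simp only [if_neg (by omega : (0:ℕ) ≠ m + 1)]
          exact h0
        · simp
        · intro t htm
          by_cases ht : t = m
          · subst ht
            simp only [if_pos rfl, if_neg (by omega : t ≠ t + 1)]
            rw [hm]
            exact hbc
          · simp only [if_neg (by omega : t ≠ m + 1), if_neg (by omega : t + 1 ≠ m + 1)]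
            exact hc t (by omega)
  obtain ⟨m, p, h0, hm, hc⟩ := h1
  exact path_dedup r y x m p h0 hm hc

namespace PBVSetup

variable (S : PBVSetup n M)

lemma typeI_of (m : ℕ) (p : ℕ → Fin n)
    (hinj : ∀ s, s ≤ m → ∀ t, t ≤ m → s ≠ t → p s ≠ p t)
    (s : Fin n) (hs : ∀ t, t ≤ m → s ≠ p t)
    (h : M) (hhX : h ∈ S.X s) (hhs : ¬ S.lg s h) (hhl : S.lg (p 0) h)
    (γ : ℕ → M) (hγ : ∀ t, t < m → γ t ∈ S.X (p t) ∧ S.lg (p t) (γ t) ∧ S.lg (p (t+1)) (γ t))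
    (g' : M) (hg' : g' ∈ S.X (p m)) (hfin : S.lg (p m) g' → S.lg s g') :
    TypeIWitness S.u S.a S.b S.X := by
  refine ⟨m + 2, fun t => if t = 0 then s else p (t - 1),
    fun t => if t = 0 then h else if t ≤ m then γ (t - 1) else g', by omega, ?_, ?_, ?_, ?_, ?_, ?_⟩
  · intro s1 hs1 t1 ht1 hne
    by_cases h1 : s1 = 0 <;> by_cases h2 : t1 = 0
    · omega
    · simp only [h1, h2, if_true, if_false, ite_true, ite_false]
      exact hs (t1 - 1) (by omega)
    · simp only [h1, h2, if_true, if_false, ite_true, ite_false]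
      exact fun hh => (hs (s1 - 1) (by omega)) hh.symm
    · simp only [h1, h2, if_false, ite_false]
      exact hinj (s1 - 1) (by omega) (t1 - 1) (by omega) (by omega)
  · intro t ht
    by_cases h1 : t = 0
    · simp only [h1, if_true, ite_true]
      exact hhX
    · by_cases h2 : t ≤ m
      · simp only [h1, h2, if_true, if_false, ite_true, ite_false]
        exact (hγ (t - 1) (by omega)).1
      · have : t = m + 1 := by omega
        simp only [h1, h2, if_false, ite_false]
        rw [this]
        simpa using hg'
  · simp only [if_pos rfl]
    exact (S.sm_iff s h).mp hhs
  · simp only [if_neg (by omega : (1:ℕ) ≠ 0), if_pos rfl]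
    exact hhl
  · intro t ht1 ht2
    have ht2' : t ≤ m := by omega
    have htne : t ≠ 0 := by omega
    constructor
    · simp only [htne, ht2', if_false, if_true, ite_false, ite_true]
      exact (hγ (t - 1) (by omega)).2.1
    · simp only [htne, ht2', show t + 1 ≠ 0 by omega, if_false, if_true, ite_false, ite_true]
      have := (hγ (t - 1) (by omega)).2.2
      rw [show t - 1 + 1 = t by omega] at this
      rw [show t + 1 - 1 = t by omega]
      exact this
  · intro hcon
    obtain ⟨hc1, hc2⟩ := hcon
    simp only [show m + 2 - 1 = m + 1 by omega, show (m+1:ℕ) ≠ 0 by omega,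
      show ¬ (m + 1 ≤ m) by omega, if_false, ite_false, if_pos rfl, ite_true] at hc1 hc2
    rw [show m + 1 - 1 = m by omega] at hc1
    have hlg : S.lg s g' := hfin hc1
    exact S.ne_ab s (hlg.symm.trans hc2)

lemma typeII_of (m : ℕ) (hm : 1 ≤ m) (p : ℕ → Fin n)
    (hinj : ∀ s, s ≤ m → ∀ t, t ≤ m → s ≠ t → p s ≠ p t)
    (γ : ℕ → M) (hγ : ∀ t, t < m → γ t ∈ S.X (p t) ∧ S.lg (p t) (γ t) ∧ S.lg (p (t+1)) (γ t))
    (H : Finset M) (hHc : H.card = S.R (p 0))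
    (hH : ∀ h ∈ H, h ∈ S.X (p m) ∧ ¬ S.lg (p m) h ∧ ¬ S.lg (p 0) h)
    (hRlt : S.R (p 0) < S.R (p m)) :
    TypeIIWitness S.u S.a S.b S.X := by
  have hb0 := S.hb (p 0)
  have hbm := S.hb (p m)
  have hRpos : 0 < S.R (p 0) := by have := S.hR2 (p 0); omega
  have hHne : H.Nonempty := Finset.card_pos.mp (by omega)
  obtain ⟨h0, hh0⟩ := hHne
  set L := H.toList with hL
  have hlen : L.length = S.R (p 0) := by rw [hL, Finset.length_toList, hHc]
  have hnodup : L.Nodup := Finset.nodup_toList H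
  set hf : ℕ → M := fun j => L.getD j h0 with hhf
  have hfmem : ∀ j, j < S.R (p 0) → hf j ∈ H := by
    intro j hj
    have hjl : j < L.length := by omega
    show L.getD j h0 ∈ H
    rw [List.getD_eq_getElem L h0 hjl]
    exact Finset.mem_toList.mp (List.getElem_mem hjl)
  have hdiv : S.a (p 0) / S.b (p 0) = (S.R (p 0) : ℝ) := by
    rw [S.hRa (p 0)]
    field_simp
  have hdivm : S.a (p m) / S.b (p m) = (S.R (p m) : ℝ) := by
    rw [S.hRa (p m)]
    field_simp
  refine ⟨m + 1, S.R (p 0), p, hf, γ, by omega, hRpos, ?_, hdiv, ?_, ?_, ?_, ?_⟩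
  · intro s1 hs1 t1 ht1 hne
    exact hinj s1 (by omega) t1 (by omega) hne
  · rw [show m + 1 - 1 = m by omega, hdiv, hdivm]
    exact_mod_cast hRlt
  · intro j hj j' hj' hne
    have hjl : j < L.length := by omega
    have hjl' : j' < L.length := by omega
    show L.getD j h0 ≠ L.getD j' h0
    rw [List.getD_eq_getElem L h0 hjl, List.getD_eq_getElem L h0 hjl']
    intro heq
    exact hne (List.Nodup.getElem_inj_iff hnodup |>.mp heq)
  · intro j hj
    rw [show m + 1 - 1 = m by omega]
    have hmem := hfmem j hj
    obtain ⟨hX1, hX2, hX3⟩ := hH _ hmem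
    exact ⟨hX1, (S.sm_iff _ _).mp hX2, (S.sm_iff _ _).mp hX3⟩
  · intro t ht
    rw [show m + 1 - 1 = m by omega] at ht
    exact ⟨(hγ t ht).1, (hγ t ht).2.1, (hγ t ht).2.2⟩

/-- the LL transfer-edge relation. -/
def rLL (v z : Fin n) : Prop :=
  ∃ g ∈ S.E, S.own g = v ∧ S.own' g = z ∧ S.lg v g ∧ S.lg z g

variable (hI : ¬ TypeIWitness S.u S.a S.b S.X)

include hI in
/-- no small-to-large edges. -/
lemma noSL {g : M} (hg : g ∈ S.E) (h : ¬ S.lg (S.own g) g) : ¬ S.lg (S.own' g) g := by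
  intro hlgd
  have hsd : S.own g ≠ S.own' g := S.mem_E.mp hg
  -- Claim 1 : the source s = own g is not LL-reachable from d = own' g
  have hclaim1 : ∀ x, Relation.ReflTransGen S.rLL (S.own' g) x → S.own g ≠ x := by
    intro x hx hsx
    obtain ⟨m, p, hp0, hpm, hpc, hpinj⟩ := exists_simple_path S.rLL hx
    rcases Nat.eq_zero_or_pos m with hm0 | hmpos
    · subst hm0
      exact hsd (hsx.trans (hpm.symm.trans hp0))
    have hγex : ∀ t, ∃ gg, t < m → (gg ∈ S.E ∧ S.own gg = p t ∧ S.own' gg = p (t+1) ∧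
        S.lg (p t) gg ∧ S.lg (p (t+1)) gg) := by
      intro t
      by_cases ht : t < m
      · obtain ⟨gg, h1, h2, h3, h4, h5⟩ := hpc t ht
        exact ⟨gg, fun _ => ⟨h1, h2, h3, h4, h5⟩⟩
      · exact ⟨g, fun hh => absurd hh ht⟩
    choose γ hγ using hγex
    apply hI
    refine S.typeI_of (m - 1) p ?_ (S.own g) ?_ g ?_ h ?_ γ ?_ (γ (m - 1)) ?_ ?_
    · intro s1 h1 t1 h2 hne
      exact hpinj s1 (by omega) t1 (by omega) hne
    · intro t ht heq
      have : p t = p m := by rw [← heq, hsx, hpm]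
      exact (hpinj t (by omega) m (le_refl m) (by omega)) this
    · exact hsx ▸ S.own_mem g
    · rw [hp0]; exact hlgd
    · intro t ht
      have hh := hγ t (by omega)
      exact ⟨S.mem_X_iff.mpr hh.2.1, hh.2.2.2.1, hh.2.2.2.2⟩
    · have hh := hγ (m - 1) (by omega)
      exact S.mem_X_iff.mpr hh.2.1
    · intro _
      have hh := hγ (m - 1) (by omega)
      have h5 := hh.2.2.2.2
      rw [show m - 1 + 1 = m by omega, hpm, ← hsx] at h5
      exact h5
  -- Claim 2 : every out-good of a reachable agent is large for it
  have hclaim2 : ∀ x, Relation.ReflTransGen S.rLL (S.own' g) x →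
      ∀ g' ∈ S.E, S.own g' = x → S.lg x g' := by
    intro x hx g' hg'E hg'o
    by_contra hng'
    obtain ⟨m, p, hp0, hpm, hpc, hpinj⟩ := exists_simple_path S.rLL hx
    have hpref : ∀ t, t ≤ m → Relation.ReflTransGen S.rLL (S.own' g) (p t) := by
      intro t
      induction t with
      | zero => intro _; rw [hp0]
      | succ k ih =>
          intro hk
          exact Relation.ReflTransGen.tail (ih (by omega)) (hpc k (by omega))
    have hγex : ∀ t, ∃ gg, t < m → (gg ∈ S.E ∧ S.own gg = p t ∧ S.own' gg = p (t+1) ∧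
        S.lg (p t) gg ∧ S.lg (p (t+1)) gg) := by
      intro t
      by_cases ht : t < m
      · obtain ⟨gg, h1, h2, h3, h4, h5⟩ := hpc t ht
        exact ⟨gg, fun _ => ⟨h1, h2, h3, h4, h5⟩⟩
      · exact ⟨g, fun hh => absurd hh ht⟩
    choose γ hγ using hγex
    apply hI
    refine S.typeI_of m p hpinj (S.own g) ?_ g (S.own_mem g) h ?_ γ ?_ g' ?_ ?_
    · intro t ht
      exact hclaim1 (p t) (hpref t ht)
    · rw [hp0]; exact hlgd
    · intro t ht
      have hh := hγ t ht
      exact ⟨S.mem_X_iff.mpr hh.2.1, hh.2.2.2.1, hh.2.2.2.2⟩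
    · rw [hpm, ← hg'o]; exact S.own_mem g'
    · intro hcon
      rw [hpm] at hcon
      exact absurd hcon hng'
  -- build the all-large cycle
  set A : Finset (Fin n) := univ.filter
    (fun x => Relation.ReflTransGen S.rLL (S.own' g) x) with hA
  have hdA : S.own' g ∈ A := by
    rw [hA, Finset.mem_filter]
    exact ⟨Finset.mem_univ _, Relation.ReflTransGen.refl⟩
  have hout : ∀ x ∈ A, ∃ g', g' ∈ S.E ∧ S.own g' = x := by
    intro x hx
    rw [hA, Finset.mem_filter] at hx
    have hrx := hx.2
    have hin : ∃ gg ∈ S.E, S.own' gg = x := by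
      rcases Relation.ReflTransGen.cases_tail hrx with heq | ⟨b, _, hbe⟩
      · exact ⟨g, hg, heq.symm⟩
      · obtain ⟨gg, h1, h2, h3, _, _⟩ := hbe
        exact ⟨gg, h1, h3⟩
    exact S.out_edge_of_in hin
  set nxt : Fin n → M := fun x =>
    if hx : ∃ g', g' ∈ S.E ∧ S.own g' = x then hx.choose else g with hnxt
  apply S.exists_cycle A ⟨_, hdA⟩ nxt
  intro x hx
  have hex := hout x hx
  have hval : nxt x = hex.choose := by rw [hnxt]; exact dif_pos hex
  obtain ⟨hE', ho'⟩ := hex.choose_spec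
  have hrx : Relation.ReflTransGen S.rLL (S.own' g) x := by
    rw [hA, Finset.mem_filter] at hx
    exact hx.2
  have hlgx : S.lg x hex.choose := hclaim2 x hrx _ hE' ho'
  have hlgd' : S.lg (S.own' hex.choose) hex.choose :=
    S.noLS hE' (by rw [ho']; exact hlgx)
  refine ⟨by rw [hval]; exact hE', by rw [hval, ho'], by rw [hval]; exact hlgx,
    by rw [hval]; exact hlgd', ?_⟩
  rw [hval, hA, Finset.mem_filter]
  refine ⟨Finset.mem_univ _, Relation.ReflTransGen.tail hrx ?_⟩
  exact ⟨hex.choose, hE', ho', rfl, hlgx, hlgd'⟩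

include hI in
lemma cls {g : M} (hg : g ∈ S.E) :
    (S.lg (S.own g) g ∧ S.lg (S.own' g) g) ∨ (¬ S.lg (S.own g) g ∧ ¬ S.lg (S.own' g) g) := by
  by_cases h : S.lg (S.own g) g
  · exact Or.inl ⟨h, S.noLS hg h⟩
  · exact Or.inr ⟨h, S.noSL hI hg h⟩

noncomputable def ELL : Finset M := S.E.filter fun g => S.lg (S.own g) g
noncomputable def ESS : Finset M := S.E.filter fun g => ¬ S.lg (S.own g) g

noncomputable def inL (v : Fin n) : ℕ := (S.ELL.filter fun g => S.own' g = v).card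
noncomputable def outL (v : Fin n) : ℕ := (S.ELL.filter fun g => S.own g = v).card
noncomputable def inS (v : Fin n) : ℕ := (S.ESS.filter fun g => S.own' g = v).card
noncomputable def outS (v : Fin n) : ℕ := (S.ESS.filter fun g => S.own g = v).card
noncomputable def nL (v : Fin n) : ℤ := (S.inL v : ℤ) - S.outL v

lemma mem_ELL {g : M} : g ∈ S.ELL ↔ g ∈ S.E ∧ S.lg (S.own g) g := by
  unfold ELL; exact Finset.mem_filter

lemma mem_ESS {g : M} : g ∈ S.ESS ↔ g ∈ S.E ∧ ¬ S.lg (S.own g) g := by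
  unfold ESS; exact Finset.mem_filter

include hI in
lemma lg_dst_ELL {g : M} (hg : g ∈ S.ELL) : S.lg (S.own' g) g := by
  rw [S.mem_ELL] at hg
  rcases S.cls hI hg.1 with ⟨_, hld⟩ | ⟨hns, _⟩
  · exact hld
  · exact absurd hg.2 hns

include hI in
lemma sm_dst_ESS {g : M} (hg : g ∈ S.ESS) : ¬ S.lg (S.own' g) g := by
  rw [S.mem_ESS] at hg
  rcases S.cls hI hg.1 with ⟨hl, _⟩ | ⟨_, hns⟩
  · exact absurd hl hg.2
  · exact hns

include hI in
lemma inV_eq (v : Fin n) : S.inV v = S.R v * S.inL v + S.inS v := by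
  unfold inV
  rw [← Finset.sum_filter_add_sum_filter_not (S.E.filter (fun g => S.own' g = v))
      (fun g => S.lg (S.own g) g)]
  congr 1
  · rw [Finset.filter_comm]
    have hcg : ∀ g ∈ (S.E.filter fun g => S.lg (S.own g) g).filter (fun g => S.own' g = v),
        S.w v g = S.R v := by
      intro g hgm
      rw [Finset.mem_filter] at hgm
      have hELL : g ∈ S.ELL := hgm.1
      exact S.w_lg (hgm.2 ▸ S.lg_dst_ELL hI hELL)
    rw [Finset.sum_congr rfl hcg, Finset.sum_const, smul_eq_mul, mul_comm]
    rfl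
  · rw [Finset.filter_comm]
    have hcg : ∀ g ∈ (S.E.filter fun g => ¬ S.lg (S.own g) g).filter (fun g => S.own' g = v),
        S.w v g = 1 := by
      intro g hgm
      rw [Finset.mem_filter] at hgm
      have hESS : g ∈ S.ESS := hgm.1
      exact S.w_sm (hgm.2 ▸ S.sm_dst_ESS hI hESS)
    rw [Finset.sum_congr rfl hcg, Finset.sum_const, smul_eq_mul, mul_one]
    rfl

lemma outV_eq (v : Fin n) : S.outV v = S.R v * S.outL v + S.outS v := by
  unfold outV
  rw [← Finset.sum_filter_add_sum_filter_not (S.E.filter (fun g => S.own g = v))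
      (fun g => S.lg (S.own g) g)]
  congr 1
  · rw [Finset.filter_comm]
    have hcg : ∀ g ∈ (S.E.filter fun g => S.lg (S.own g) g).filter (fun g => S.own g = v),
        S.w v g = S.R v := by
      intro g hgm
      rw [Finset.mem_filter] at hgm
      exact S.w_lg (hgm.2 ▸ (Finset.mem_filter.mp hgm.1).2)
    rw [Finset.sum_congr rfl hcg, Finset.sum_const, smul_eq_mul, mul_comm]
    rfl
  · rw [Finset.filter_comm]
    have hcg : ∀ g ∈ (S.E.filter fun g => ¬ S.lg (S.own g) g).filter (fun g => S.own g = v),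
        S.w v g = 1 := by
      intro g hgm
      rw [Finset.mem_filter] at hgm
      exact S.w_sm (hgm.2 ▸ (Finset.mem_filter.mp hgm.1).2)
    rw [Finset.sum_congr rfl hcg, Finset.sum_const, smul_eq_mul, mul_one]
    rfl

include hI in
lemma Dl_eq (v : Fin n) :
    S.Dl v = (S.R v : ℤ) * S.nL v + ((S.inS v : ℤ) - S.outS v) := by
  unfold Dl nL
  rw [S.inV_eq hI v, S.outV_eq v]
  push_cast
  ring

include hI in
lemma recv_D0 {v : Fin n} (h : 0 < S.inS v) : S.Dl v = 0 := by
  obtain ⟨g, hgm⟩ := Finset.card_pos.mp h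
  rw [Finset.mem_filter] at hgm
  have hgE : g ∈ S.E := (S.mem_ESS.mp hgm.1).1
  have hsm' : ¬ S.lg v g := hgm.2 ▸ S.sm_dst_ESS hI hgm.1
  have hret := S.ret hgE
  rw [hgm.2, S.w_sm hsm'] at hret
  have := S.Dl_nonneg v
  omega

include hI in
lemma sender_inS {v : Fin n} (h : 0 < S.outS v) : S.inS v = 0 := by
  by_contra hc
  have hin : 0 < S.inS v := Nat.pos_of_ne_zero hc
  obtain ⟨g', hg'm⟩ := Finset.card_pos.mp h
  rw [Finset.mem_filter] at hg'm
  have hg'E : g' ∈ S.E := (S.mem_ESS.mp hg'm.1).1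
  have hg's : ¬ S.lg (S.own g') g' := (S.mem_ESS.mp hg'm.1).2
  have hg'd : ¬ S.lg (S.own' g') g' := S.sm_dst_ESS hI hg'm.1
  obtain ⟨g, hgm⟩ := Finset.card_pos.mp hin
  rw [Finset.mem_filter] at hgm
  have hgE : g ∈ S.E := (S.mem_ESS.mp hgm.1).1
  have hgs : ¬ S.lg v g := hgm.2 ▸ S.sm_dst_ESS hI hgm.1
  have hcon := S.ssOutIns hg'E hg's hg'd g hgE (by rw [hgm.2, hg'm.2])
  rw [hg'm.2] at hcon
  exact hgs hcon

include hI in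
lemma sender_nL {v : Fin n} (h : 0 < S.outS v) : 1 ≤ S.nL v := by
  have hDl := S.Dl_eq hI v
  have hnn := S.Dl_nonneg v
  have hiS := S.sender_inS hI h
  by_contra hc
  push_neg at hc
  have hle : S.nL v ≤ 0 := by omega
  have : (S.R v : ℤ) * S.nL v ≤ 0 :=
    mul_nonpos_of_nonneg_of_nonpos (by positivity) hle
  omega

include hI in
lemma sender_Dub {v : Fin n} (h : 0 < S.outS v) : S.Dl v ≤ (S.R v : ℤ) - 1 := by
  obtain ⟨g', hg'm⟩ := Finset.card_pos.mp h
  rw [Finset.mem_filter] at hg'm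
  have hg'E : g' ∈ S.E := (S.mem_ESS.mp hg'm.1).1
  obtain ⟨g, hgE, hgv⟩ := S.ex_out_edge ⟨g', hg'E, hg'm.2⟩
  have hret := S.ret hgE
  rw [hgv] at hret
  have h1 := S.w_le_R v g
  omega

include hI in
lemma middle {v : Fin n} (h1 : S.outS v = 0) (h2 : S.inS v = 0) :
    S.nL v = 0 ∧ S.Dl v = 0 := by
  have hDl := S.Dl_eq hI v
  have hnn := S.Dl_nonneg v
  have hR2 := S.hR2 v
  have hnL0 : S.nL v = 0 := by
    have hRpos : (0:ℤ) < (S.R v : ℤ) := by exact_mod_cast Nat.lt_of_lt_of_le Nat.zero_lt_two hR2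
    rcases lt_trichotomy (S.nL v) 0 with hlt | heq | hgt
    · exfalso
      have hneg : (S.R v : ℤ) * S.nL v < 0 := mul_neg_of_pos_of_neg hRpos hlt
      omega
    · exact heq
    · exfalso
      have hin : 0 < S.inL v := by
        unfold nL at hgt
        omega
      obtain ⟨g, hgm⟩ := Finset.card_pos.mp hin
      rw [Finset.mem_filter] at hgm
      have hgE : g ∈ S.E := (S.mem_ELL.mp hgm.1).1
      have hlgv : S.lg v g := hgm.2 ▸ S.lg_dst_ELL hI hgm.1
      have hret := S.ret hgE
      rw [hgm.2, S.w_lg hlgv] at hret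
      have h1' : (1:ℤ) ≤ S.nL v := hgt
      have hmul := mul_le_mul_of_nonneg_left h1' (le_of_lt hRpos)
      rw [mul_one] at hmul
      omega
  refine ⟨hnL0, ?_⟩
  rw [hnL0, mul_zero] at hDl
  omega

noncomputable def θ (v : Fin n) : ℕ :=
  if 2 ≤ S.nL v ∨ S.Dl v = 0 then S.R v else S.R v + 1 - (S.Dl v).toNat

noncomputable def φ (v : Fin n) : ℕ :=
  (univ.filter fun x => 0 < S.outS x ∧ Relation.ReflTransGen S.rLL v x).sup S.θ

lemma φ_mono {v z : Fin n} (h : S.rLL v z) : S.φ z ≤ S.φ v := by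
  unfold φ
  apply Finset.sup_le
  intro x hx
  rw [Finset.mem_filter] at hx
  apply Finset.le_sup
  rw [Finset.mem_filter]
  exact ⟨Finset.mem_univ _, hx.2.1, Relation.ReflTransGen.head h hx.2.2⟩
lemma φ_sender {x : Fin n} (h : 0 < S.outS x) : S.θ x ≤ S.φ x := by
  unfold φ
  apply Finset.le_sup
  rw [Finset.mem_filter]
  exact ⟨Finset.mem_univ _, h, Relation.ReflTransGen.refl⟩

lemma φ_recv (hII : ¬ TypeIIWitness S.u S.a S.b S.X) {y : Fin n} (h : 0 < S.inS y)
    (hI' : ¬ TypeIWitness S.u S.a S.b S.X) : S.φ y ≤ S.R y := by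
  obtain ⟨g0, hg0m⟩ := Finset.card_pos.mp h
  rw [Finset.mem_filter] at hg0m
  unfold φ
  apply Finset.sup_le
  intro x hx
  rw [Finset.mem_filter] at hx
  obtain ⟨-, hxS, hreach⟩ := hx
  by_contra hgt
  push_neg at hgt
  have hyx : y ≠ x := by
    intro heq
    rw [heq, S.sender_inS hI' hxS] at h
    exact absurd h (lt_irrefl 0)
  have hDl := S.Dl_eq hI' x
  have hiS := S.sender_inS hI' hxS
  have hnL := S.sender_nL hI' hxS
  have hDub := S.sender_Dub hI' hxS
  have hDnn := S.Dl_nonneg x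
  have hRx2 := S.hR2 x
  have hRy2 := S.hR2 y
  have hRxpos : (0:ℤ) ≤ (S.R x : ℤ) := by positivity
  have hkey : S.R y < S.R x ∧ (S.R y : ℤ) ≤ S.outS x := by
    unfold θ at hgt
    split_ifs at hgt with hcase
    · refine ⟨hgt, ?_⟩
      rcases hcase with h2 | h0
      · have hmul : (S.R x:ℤ) * 2 ≤ (S.R x:ℤ) * S.nL x :=
          mul_le_mul_of_nonneg_left h2 hRxpos
        omega
      · have hmul : (S.R x:ℤ) * 1 ≤ (S.R x:ℤ) * S.nL x :=
          mul_le_mul_of_nonneg_left hnL hRxpos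
        omega
    · push_neg at hcase
      have hnL1 : S.nL x = 1 := by omega
      have hD1 : 1 ≤ S.Dl x := by
        rcases lt_or_eq_of_le hDnn with hh | hh
        · omega
        · exact absurd hh.symm hcase.2
      rw [hnL1, mul_one] at hDl
      constructor
      · omega
      · omega
  obtain ⟨hRlt, houtS⟩ := hkey
  obtain ⟨m, p, hp0, hpm, hpc, hpinj⟩ := exists_simple_path S.rLL hreach
  have hm1 : 1 ≤ m := by
    rcases Nat.eq_zero_or_pos m with h0 | h1
    · exfalso; apply hyx; rw [← hp0, ← hpm, h0]
    · exact h1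
  have hγex : ∀ t, ∃ gg, t < m → (gg ∈ S.E ∧ S.own gg = p t ∧ S.own' gg = p (t+1) ∧
      S.lg (p t) gg ∧ S.lg (p (t+1)) gg) := by
    intro t
    by_cases ht : t < m
    · obtain ⟨gg, h1, h2, h3, h4, h5⟩ := hpc t ht
      exact ⟨gg, fun _ => ⟨h1, h2, h3, h4, h5⟩⟩
    · exact ⟨g0, fun hh => absurd hh ht⟩
  choose γ hγ using hγex
  have hγ' : ∀ t, t < m → γ t ∈ S.X (p t) ∧ S.lg (p t) (γ t) ∧ S.lg (p (t+1)) (γ t) := by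
    intro t ht
    have hh := hγ t ht
    exact ⟨S.mem_X_iff.mpr hh.2.1, hh.2.2.2.1, hh.2.2.2.2⟩
  have hcard : S.R y ≤ (S.ESS.filter fun g => S.own g = x).card := by exact_mod_cast houtS
  obtain ⟨H, hHsub, hHcard⟩ := Finset.exists_subset_card_eq hcard
  have hHp : ∀ hh ∈ H, hh ∈ S.X x ∧ ¬ S.lg x hh ∧ ¬ S.lg y hh := by
    intro hh hmem
    have h2 := hHsub hmem
    rw [Finset.mem_filter] at h2
    have hsmx : ¬ S.lg (S.own hh) hh := (S.mem_ESS.mp h2.1).2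
    refine ⟨h2.2 ▸ S.own_mem hh, h2.2 ▸ hsmx, ?_⟩
    intro hlgy
    apply hI'
    refine S.typeI_of (m - 1) p ?_ x ?_ hh ?_ (h2.2 ▸ hsmx) ?_ γ ?_ (γ (m - 1)) ?_ ?_
    · intro s1 hs1 t1 ht1 hne
      exact hpinj s1 (by omega) t1 (by omega) hne
    · intro t ht heq
      have : p t = p m := by rw [← heq, hpm]
      exact (hpinj t (by omega) m (le_refl m) (by omega)) this
    · exact h2.2 ▸ S.own_mem hh
    · rw [hp0]; exact hlgy
    · intro t ht
      exact hγ' t (by omega)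
    · exact (hγ' (m-1) (by omega)).1
    · intro _
      have h5 := (hγ' (m-1) (by omega)).2.2
      rw [show m - 1 + 1 = m by omega, hpm] at h5
      exact h5
  apply hII
  apply S.typeII_of m hm1 p hpinj γ hγ' H
  · rw [hp0]; exact hHcard
  · intro hh hmem
    obtain ⟨hX1, hX2, hX3⟩ := hHp hh hmem
    rw [hpm, hp0]
    exact ⟨hX1, hX2, hX3⟩
  · rw [hp0, hpm]; exact hRlt

include hI in
lemma final (hII : ¬ TypeIIWitness S.u S.a S.b S.X) : False := by
  set ind : Fin n → ℤ := fun v => if 0 < S.outS v ∧ 1 ≤ S.Dl v then 1 else 0 with hind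
  have hper : ∀ v, ((S.R v : ℤ) - S.φ v) * S.nL v ≤ S.Dl v - ind v := by
    intro v
    have hRv := S.hR2 v
    have hDnn := S.Dl_nonneg v
    by_cases hvS : 0 < S.outS v
    · have hiS := S.sender_inS hI hvS
      have hnL := S.sender_nL hI hvS
      have hDub := S.sender_Dub hI hvS
      have hθφ : (S.θ v : ℤ) ≤ S.φ v := by exact_mod_cast S.φ_sender hvS
      have hbound : ((S.R v : ℤ) - S.θ v) * S.nL v ≤ S.Dl v - ind v := by
        have hindv : ind v = if 0 < S.outS v ∧ 1 ≤ S.Dl v then 1 else 0 := rfl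
        unfold θ
        split_ifs with hcase
        · rw [sub_self, zero_mul, hindv]
          split_ifs with hi
          · omega
          · omega
        · push_neg at hcase
          have hnL1 : S.nL v = 1 := by omega
          have hD1 : 1 ≤ S.Dl v := by
            rcases lt_or_eq_of_le hDnn with hh | hh
            · omega
            · exact absurd hh.symm hcase.2
          rw [hnL1, mul_one, hindv, if_pos ⟨hvS, hD1⟩]
          have h2 : (S.Dl v).toNat ≤ S.R v + 1 := by omega
          rw [Nat.cast_sub h2]
          push_cast
          omega
      calc ((S.R v:ℤ) - S.φ v) * S.nL v
          ≤ ((S.R v:ℤ) - S.θ v) * S.nL v := by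
            apply mul_le_mul_of_nonneg_right (by omega) (by omega)
        _ ≤ _ := hbound
    · push_neg at hvS
      have hvS0 : S.outS v = 0 := by omega
      have hind0 : ind v = 0 := by
        show (if 0 < S.outS v ∧ 1 ≤ S.Dl v then (1:ℤ) else 0) = 0
        rw [if_neg]
        intro hc
        omega
      by_cases hvR : 0 < S.inS v
      · have hD0 := S.recv_D0 hI hvR
        have hDl := S.Dl_eq hI v
        have hnLneg : S.nL v ≤ 0 := by
          by_contra hpos
          push_neg at hpos
          have hmul : (S.R v:ℤ)*1 ≤ (S.R v:ℤ)*S.nL v :=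
            mul_le_mul_of_nonneg_left (by omega) (by positivity)
          rw [mul_one] at hmul
          omega
        have hφle : (S.φ v : ℤ) ≤ S.R v := by exact_mod_cast S.φ_recv hII hvR hI
        have hmul2 := mul_nonpos_of_nonneg_of_nonpos (by omega : (0:ℤ) ≤ (S.R v:ℤ) - S.φ v) hnLneg
        omega
      · have hvR0 : S.inS v = 0 := by omega
        obtain ⟨hnL0, hD0⟩ := S.middle hI hvS0 hvR0
        rw [hnL0, mul_zero, hind0]
        omega
  have hsum1 : ∑ v, S.Dl v = ∑ v, ((S.R v : ℤ) * S.nL v) + ∑ v, ((S.inS v:ℤ) - S.outS v) := by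
    rw [← Finset.sum_add_distrib]
    exact Finset.sum_congr rfl fun v _ => S.Dl_eq hI v
  have hSS0 : ∑ v, ((S.inS v:ℤ) - S.outS v) = 0 := by
    have h1 : ∑ v : Fin n, (S.inS v : ℤ) = (S.ESS.card : ℤ) := by
      have := Finset.card_eq_sum_card_fiberwise
        (f := S.own') (s := S.ESS) (t := univ) (fun x _ => Finset.mem_univ _)
      unfold inS
      rw [this]
      push_cast
      rfl
    have h2 : ∑ v : Fin n, (S.outS v : ℤ) = (S.ESS.card : ℤ) := by
      have := Finset.card_eq_sum_card_fiberwise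
        (f := S.own) (s := S.ESS) (t := univ) (fun x _ => Finset.mem_univ _)
      unfold outS
      rw [this]
      push_cast
      rfl
    rw [Finset.sum_sub_distrib, h1, h2, sub_self]
  have hfib : ∀ (ow : M → Fin n),
      ∑ v, (S.φ v : ℤ) * ((S.ELL.filter fun g => ow g = v).card : ℤ)
        = ∑ g ∈ S.ELL, (S.φ (ow g) : ℤ) := by
    intro ow
    rw [← Finset.sum_fiberwise S.ELL ow (fun g => (S.φ (ow g) : ℤ))]
    apply Finset.sum_congr rfl
    intro v _
    have hc : ∀ g ∈ S.ELL.filter (fun g => ow g = v), (S.φ (ow g) : ℤ) = (S.φ v : ℤ) := by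
      intro g hg
      rw [(Finset.mem_filter.mp hg).2]
    rw [Finset.sum_congr rfl hc, Finset.sum_const, nsmul_eq_mul, mul_comm]
  have hφsum : ∑ v, (S.φ v : ℤ) * S.nL v ≤ 0 := by
    have hsplit : ∑ v, (S.φ v : ℤ) * S.nL v
        = (∑ g ∈ S.ELL, (S.φ (S.own' g) : ℤ)) - (∑ g ∈ S.ELL, (S.φ (S.own g) : ℤ)) := by
      rw [← hfib S.own', ← hfib S.own, ← Finset.sum_sub_distrib]
      apply Finset.sum_congr rfl
      intro v _
      unfold nL inL outL
      ring
    have hedge : ∀ g ∈ S.ELL, (S.φ (S.own' g):ℤ) ≤ S.φ (S.own g) := by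
      intro g hg
      have hm := S.mem_ELL.mp hg
      have hr : S.rLL (S.own g) (S.own' g) :=
        ⟨g, hm.1, rfl, rfl, hm.2, S.lg_dst_ELL hI hg⟩
      exact_mod_cast S.φ_mono hr
    have := Finset.sum_le_sum hedge
    omega
  have hRsum : ∑ v, (S.R v : ℤ) * S.nL v = ∑ v, S.Dl v := by
    rw [hsum1, hSS0, add_zero]
  have hstep : ∑ v, ((S.R v:ℤ) - S.φ v) * S.nL v + ∑ v, (S.φ v:ℤ) * S.nL v
      = ∑ v, (S.R v:ℤ) * S.nL v := by
    rw [← Finset.sum_add_distrib]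
    apply Finset.sum_congr rfl
    intro v _
    ring
  have hperSum : ∑ v, ((S.R v:ℤ) - S.φ v) * S.nL v ≤ ∑ v, (S.Dl v - ind v) :=
    Finset.sum_le_sum (fun v _ => hper v)
  have hindpos : 1 ≤ ∑ v, ind v := by
    obtain ⟨j, hj⟩ := S.Dl_ex_pos
    have hjS : 0 < S.outS j := by
      by_contra hc
      push_neg at hc
      have hc0 : S.outS j = 0 := by omega
      by_cases hr : 0 < S.inS j
      · have := S.recv_D0 hI hr; omega
      · have := (S.middle hI hc0 (by omega)).2; omega
    have hj1 : ind j = 1 := by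
      show (if 0 < S.outS j ∧ 1 ≤ S.Dl j then (1:ℤ) else 0) = 1
      rw [if_pos ⟨hjS, hj⟩]
    have hnn : ∀ v ∈ univ, (0:ℤ) ≤ ind v := by
      intro v _
      show (0:ℤ) ≤ if 0 < S.outS v ∧ 1 ≤ S.Dl v then (1:ℤ) else 0
      split_ifs <;> omega
    calc (1:ℤ) = ind j := hj1.symm
      _ ≤ ∑ v, ind v := Finset.single_le_sum hnn (Finset.mem_univ j)
  have hsub : ∑ v, (S.Dl v - ind v) = ∑ v, S.Dl v - ∑ v, ind v := Finset.sum_sub_distrib _ _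
  omega

end PBVSetup

end PBVaux


/-- In a personalized bi-valued instance in which every ratio
`rᵢ = aᵢ / bᵢ` is a positive integer, any Pareto-dominated allocation admits a
Type I witness or a Type II witness. -/
theorem pareto_dominated_implies_witness
    (n : ℕ) (M : Type*) [Fintype M] [DecidableEq M]
    (u : Fin n → M → ℝ) (a b : Fin n → ℝ)
    (hab : ∀ i, b i < a i) (hb : ∀ i, 0 < b i)
    (hbi : ∀ i g, u i g = a i ∨ u i g = b i)
    (hint : ∀ i, ∃ R : ℕ, 0 < R ∧ a i / b i = (R : ℝ))
    (X : Fin n → Finset M) (hX : IsAllocation X)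
    (hdom : ∃ X' : Fin n → Finset M, IsAllocation X' ∧ ParetoDominates u X' X) :
    TypeIWitness u a b X ∨ TypeIIWitness u a b X := by
  classical
  by_contra hcon
  push_neg at hcon
  obtain ⟨hI, hII⟩ := hcon
  choose R hR0 hRe using hint
  have hRa : ∀ i, a i = (R i : ℝ) * b i := by
    intro i
    have hbne : b i ≠ 0 := ne_of_gt (hb i)
    have h1 := hRe i
    rw [div_eq_iff hbne] at h1
    exact h1
  have hR2 : ∀ i, 2 ≤ R i := by
    intro i
    by_contra hlt
    push_neg at hlt
    have h1 : R i = 1 := by have := hR0 i; omega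
    have h2 := hRa i
    rw [h1] at h2
    push_cast at h2
    rw [one_mul] at h2
    exact absurd h2 (ne_of_gt (hab i))
  have hPne : (Finset.univ.filter (fun Y : Fin n → Finset M =>
      IsAllocation Y ∧ ParetoDominates u Y X)).Nonempty := by
    obtain ⟨X', h1, h2⟩ := hdom
    exact ⟨X', Finset.mem_filter.mpr ⟨Finset.mem_univ _, h1, h2⟩⟩
  obtain ⟨Xm, hXm, hminm⟩ := Finset.exists_min_image _ (fun Y => transferCount X Y) hPne
  rw [Finset.mem_filter] at hXm
  exact PBVSetup.final
    { u := u, a := a, b := b, R := R, X := X, X' := Xm,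
      hab := hab, hb := hb, hbi := hbi, hRa := hRa, hR2 := hR2,
      hX := hX, hX' := hXm.2.1, hdom := hXm.2.2,
      hmin := fun Y h1 h2 => hminm Y (Finset.mem_filter.mpr ⟨Finset.mem_univ _, h1, h2⟩) }
    hI hII
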